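/- In the semantic forcing property: if p ∈ P and @_k ⟨a₁;a₂⟩k'' ∈ p, then there exists a fresh nominal constant k' ∈ C such that p ∪ {@_k ⟨a₁⟩k', @_{k'} ⟨a₂⟩k''} ∈ P. -/

import Mathlib

/-!
Forcing in hybrid-dynamic first-order logic with rigid symbols (Găină–Badia–Kowalski).
We work with an abstract fragment: `Nom` is the set of nominals, `Mo` the set of
(base) modalities, `Atom` the set of (extended) atomic sentences of the underlying
first-order layer (equations and relational atoms), and `Subst` the set of ground
substitutions used to interpret existential quantification.
-/

namespace HDFOLR

open Cardinal

/-- Structured actions over a set `Mo` of base modalities. -/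
inductive Act (Mo : Type) : Type where
  | base : Mo → Act Mo
  | comp : Act Mo → Act Mo → Act Mo
  | union : Act Mo → Act Mo → Act Mo
  | star : Act Mo → Act Mo

/-- `a.pow n` is the `(n+1)`-fold sequential composition `a ⨟ ⋯ ⨟ a`. -/
def Act.pow {Mo : Type} (a : Act Mo) : ℕ → Act Mo
  | 0 => a
  | n + 1 => Act.comp a (a.pow n)

/-- Sentences of (a fragment of) hybrid-dynamic first-order logic with rigid symbols:
atoms, nominal sentences, possibility over structured actions, negation, finite
disjunction, retrieve `@_k`, and existential quantification (rendered by its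
ground instances, i.e. substitutions `θ : X → ∅`). -/
inductive Sen (Nom Mo Atom Subst : Type) : Type where
  | atom : Atom → Sen Nom Mo Atom Subst
  | nom : Nom → Sen Nom Mo Atom Subst
  | pos : Act Mo → Sen Nom Mo Atom Subst → Sen Nom Mo Atom Subst
  | neg : Sen Nom Mo Atom Subst → Sen Nom Mo Atom Subst
  | disj : (n : ℕ) → (Fin n → Sen Nom Mo Atom Subst) → Sen Nom Mo Atom Subst
  | ret : Nom → Sen Nom Mo Atom Subst → Sen Nom Mo Atom Subst
  | ex : (Subst → Sen Nom Mo Atom Subst) → Sen Nom Mo Atom Subst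

variable {Nom Mo Atom Subst : Type}

/-- Extended atomic sentences: atoms, nominals, and nominal relations `⟨λ⟩k'`. -/
def Sen.ExtAtomic : Sen Nom Mo Atom Subst → Prop
  | .atom _ => True
  | .nom _ => True
  | .pos (.base _) (.nom _) => True
  | _ => False

/-- Basic sentences: extended atomic sentences with retrieve applied at most once. -/
def Sen.Basic : Sen Nom Mo Atom Subst → Prop
  | .ret _ γ => γ.ExtAtomic
  | γ => γ.ExtAtomic

/-- `Reach f p k a k'`: the condition `p` forces `⟨a⟩k'` at `k`
(clauses (2)–(4) of the definition of the forcing relation, together with the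
atomic clause for nominal relations). -/
inductive Reach {P : Type} (f : P → Set (Sen Nom Mo Atom Subst)) :
    P → Nom → Act Mo → Nom → Prop where
  | base {p k m k'} :
      Sen.ret k (Sen.pos (Act.base m) (Sen.nom k')) ∈ f p → Reach f p k (Act.base m) k'
  | comp {p k k' k'' a₁ a₂} :
      Reach f p k a₁ k' → Reach f p k' a₂ k'' → Reach f p k (Act.comp a₁ a₂) k''
  | unionL {p k k'' a₁ a₂} : Reach f p k a₁ k'' → Reach f p k (Act.union a₁ a₂) k''
  | unionR {p k k'' a₁ a₂} : Reach f p k a₂ k'' → Reach f p k (Act.union a₁ a₂) k''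
  | star {p k k'' a} (n : ℕ) : Reach f p k (a.pow n) k'' → Reach f p k (Act.star a) k''

/-- The forcing relation `p ⊩^k γ` induced by `f : P → 𝒫(Sen_b(Δ))`. -/
def Forces {P : Type} [LE P] (f : P → Set (Sen Nom Mo Atom Subst)) :
    Sen Nom Mo Atom Subst → P → Nom → Prop
  | .atom a, p, k => Sen.ret k (Sen.atom a) ∈ f p
  | .nom k', p, k => Sen.ret k (Sen.nom k') ∈ f p
  | .pos a (.nom k''), p, k => Reach f p k a k''
  | .pos a γ, p, k => ∃ k', Reach f p k a k' ∧ Forces f γ p k'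
  | .neg γ, p, k => ∀ q, p ≤ q → ¬ Forces f γ q k
  | .disj _ g, p, k => ∃ i, Forces f (g i) p k
  | .ret k' γ, p, _ => Forces f γ p k'
  | .ex g, p, k => ∃ θ, Forces f (g θ) p k


/-- Kripke structures over the signature `(Nom, Mo, Atom)`: a nonempty set of worlds,
interpretations of nominals as worlds, of modalities as accessibility relations,
and of the first-order atoms as local truth at each world. -/
structure KModel (Nom Mo Atom : Type) : Type 1 where
  Wo : Type
  ne : Nonempty Wo
  nomI : Nom → Wo
  modI : Mo → Wo → Wo → Prop
  atomI : Atom → Wo → Prop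

variable {Nom Mo Atom Subst : Type}

/-- Accessibility relation interpreting structured actions. -/
def KModel.acc (M : KModel Nom Mo Atom) : Act Mo → M.Wo → M.Wo → Prop
  | .base m => M.modI m
  | .comp a b => Relation.Comp (M.acc a) (M.acc b)
  | .union a b => fun w w' => M.acc a w w' ∨ M.acc b w w'
  | .star a => Relation.ReflTransGen (M.acc a)

/-- Local satisfaction `(W,M) ⊨^w γ`. -/
def KModel.locSat (M : KModel Nom Mo Atom) : Sen Nom Mo Atom Subst → M.Wo → Prop
  | .atom a, w => M.atomI a w
  | .nom k, w => M.nomI k = w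
  | .pos a γ, w => ∃ w', M.acc a w w' ∧ M.locSat γ w'
  | .neg γ, w => ¬ M.locSat γ w
  | .disj _ g, w => ∃ i, M.locSat (g i) w
  | .ret k γ, _ => M.locSat γ (M.nomI k)
  | .ex g, w => ∃ θ, M.locSat (g θ) w

/-- Global satisfaction `(W,M) ⊨ γ`. -/
def KModel.gSat (M : KModel Nom Mo Atom) (γ : Sen Nom Mo Atom Subst) : Prop :=
  ∀ w, M.locSat γ w

/-- `(W,M) ⊨ T` for a set of sentences. -/
def KModel.satSet (M : KModel Nom Mo Atom) (T : Set (Sen Nom Mo Atom Subst)) : Prop :=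
  ∀ γ ∈ T, M.gSat γ

/-- Global semantic entailment `T ⊨ γ`. -/
def entails (T : Set (Sen Nom Mo Atom Subst)) (γ : Sen Nom Mo Atom Subst) : Prop :=
  ∀ M : KModel Nom Mo Atom, M.satSet T → M.gSat γ

/-- A forcing property `⟨P, ≤, f⟩` over the signature `(Nom, Mo, Atom, Subst)`. -/
structure ForcingProperty (P Nom Mo Atom Subst : Type) [PartialOrder P] [OrderBot P] where
  f : P → Set (Sen Nom Mo Atom Subst)
  basic : ∀ p, ∀ γ ∈ f p, γ.Basic
  mono : ∀ ⦃p q : P⦄, p ≤ q → f p ⊆ f q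
  decide : ∀ (p : P) (k : Nom) (γ : Sen Nom Mo Atom Subst), γ.ExtAtomic →
      entails (f p) (Sen.ret k γ) → ∃ q, p ≤ q ∧ Sen.ret k γ ∈ f q

universe u

variable {C : Type}

/-- Reduct of a Kripke structure over `Δ[C]` (extra nominal constants `C`) to `Δ`. -/
def KModel.reduct (M : KModel (Nom ⊕ C) Mo Atom) : KModel Nom Mo Atom where
  Wo := M.Wo
  ne := M.ne
  nomI := fun k => M.nomI (Sum.inl k)
  modI := M.modI
  atomI := M.atomI

/-- Conditions of the semantic forcing property over `Δ[C]` relative to the class `K`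
of Kripke structures over `Δ`: sets of `Δ[C]`-sentences of cardinality `< α`
satisfiable in a Kripke structure over `Δ[C]` whose `Δ`-reduct lies in `K`. -/
def SemP (K : Set (KModel Nom Mo Atom)) (α : Cardinal) :
    Set (Set (Sen (Nom ⊕ C) Mo Atom Subst)) :=
  {p | #↥p < α ∧
    ∃ M : KModel (Nom ⊕ C) Mo Atom, (∀ γ ∈ p, M.gSat γ) ∧ M.reduct ∈ K}



section AuxSemP

attribute [local instance] Classical.propDecidable

variable {Nom Mo Atom Subst C : Type}

/-- The set of constants from `C` occurring in a sentence over `Δ[C]`. -/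
def occ : Sen (Nom ⊕ C) Mo Atom Subst → Set C
  | .atom _ => ∅
  | .nom (Sum.inl _) => ∅
  | .nom (Sum.inr c) => {c}
  | .pos _ γ => occ γ
  | .neg γ => occ γ
  | .disj _ g => ⋃ i, occ (g i)
  | .ret (Sum.inl _) γ => occ γ
  | .ret (Sum.inr c) γ => insert c (occ γ)
  | .ex g => ⋃ θ, occ (g θ)

lemma occ_finite [Finite Subst] (γ : Sen (Nom ⊕ C) Mo Atom Subst) : (occ γ).Finite := by
  induction γ with
  | atom a => simp [occ]
  | nom k => cases k <;> simp [occ]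
  | pos a γ ih => simpa [occ] using ih
  | neg γ ih => simpa [occ] using ih
  | disj n g ih => exact Set.finite_iUnion ih
  | ret k γ ih => cases k with
    | inl _ => simpa [occ] using ih
    | inr c => simpa [occ] using ih.insert c
  | ex g ih => exact Set.finite_iUnion ih

lemma occ_card_le (γ : Sen (Nom ⊕ C) Mo Atom Subst) :
    #(occ γ) ≤ Cardinal.aleph0 ⊔ #Subst := by
  set β := Cardinal.aleph0 ⊔ #Subst with hβ
  have hβinf : Cardinal.aleph0 ≤ β := le_sup_left
  induction γ with
  | atom a => simp [occ]
  | nom k =>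
      cases k with
      | inl _ => simp [occ]
      | inr c =>
          simp only [occ, Cardinal.mk_fintype, Fintype.card_unique]
          calc (1 : Cardinal) ≤ Cardinal.aleph0 := Cardinal.one_le_aleph0
            _ ≤ β := hβinf
  | pos a γ ih => simpa [occ] using ih
  | neg γ ih => simpa [occ] using ih
  | disj n g ih =>
      calc #(occ (Sen.disj n g)) ≤ #(Fin n) * ⨆ i, #(occ (g i)) := by
            simpa [occ] using Cardinal.mk_iUnion_le (fun i => occ (g i))
        _ ≤ β * β := by
            refine mul_le_mul' ?_ (ciSup_le' ih)
            exact le_trans (le_of_lt (Cardinal.lt_aleph0_of_finite (Fin n))) hβinf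
        _ = β := Cardinal.mul_eq_self hβinf
  | ret k γ ih =>
      cases k with
      | inl _ => simpa [occ] using ih
      | inr c =>
          calc #(occ (Sen.ret (Sum.inr c) γ)) ≤ #(occ γ) + 1 := by
                simpa [occ] using Cardinal.mk_insert_le (s := occ γ) (a := c)
            _ ≤ β + β := add_le_add ih (le_trans Cardinal.one_le_aleph0 hβinf)
            _ = β := Cardinal.add_eq_self hβinf
  | ex g ih =>
      calc #(occ (Sen.ex g)) ≤ #Subst * ⨆ θ, #(occ (g θ)) := by
            simpa [occ] using Cardinal.mk_iUnion_le (fun θ => occ (g θ))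
        _ ≤ β * β := mul_le_mul' le_sup_right (ciSup_le' ih)
        _ = β := Cardinal.mul_eq_self hβinf

lemma acc_mk_eq (M : KModel (Nom ⊕ C) Mo Atom) (ne : Nonempty M.Wo)
    (n' : Nom ⊕ C → M.Wo) (a : Act Mo) :
    (KModel.mk M.Wo ne n' M.modI M.atomI).acc a = M.acc a := by
  induction a with
  | base m => rfl
  | comp a b iha ihb => simp [KModel.acc, iha, ihb]
  | union a b iha ihb => simp [KModel.acc, iha, ihb]
  | star a ih => simp [KModel.acc, ih]

lemma locSat_update (M : KModel (Nom ⊕ C) Mo Atom) (k' : C) (mid : M.Wo)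
    (γ : Sen (Nom ⊕ C) Mo Atom Subst) (hγ : k' ∉ occ γ) (w : M.Wo) :
    (KModel.mk M.Wo M.ne
        (fun x => if x = Sum.inr k' then mid else M.nomI x) M.modI M.atomI).locSat γ w
      ↔ M.locSat γ w := by
  induction γ generalizing w with
  | atom a => simp [KModel.locSat]
  | nom k =>
      cases k with
      | inl n => simp [KModel.locSat]
      | inr c =>
          have hc : c ≠ k' := by
            have : ¬k' = c := by simpa [occ] using hγ
            exact fun h => this h.symm
          simp [KModel.locSat, Sum.inr.injEq, hc]
  | pos a γ ih =>
      have hγ' : k' ∉ occ γ := by simpa [occ] using hγ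
      simp only [KModel.locSat]
      constructor
      · rintro ⟨w', h1, h2⟩
        exact ⟨w', by rwa [acc_mk_eq] at h1, (ih hγ' w').mp h2⟩
      · rintro ⟨w', h1, h2⟩
        exact ⟨w', by rwa [acc_mk_eq], (ih hγ' w').mpr h2⟩
  | neg γ ih =>
      have hγ' : k' ∉ occ γ := by simpa [occ] using hγ
      simp [KModel.locSat, ih hγ']
  | disj n g ih =>
      have hγ' : ∀ i, k' ∉ occ (g i) := by
        intro i hi
        exact hγ (by simpa [occ] using Set.mem_iUnion_of_mem i hi)
      simp only [KModel.locSat]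
      exact exists_congr fun i => ih i (hγ' i) w
  | ret k γ ih =>
      cases k with
      | inl n =>
          have hγ' : k' ∉ occ γ := by simpa [occ] using hγ
          simpa [KModel.locSat] using ih hγ' (M.nomI (Sum.inl n))
      | inr c =>
          have hc : c ≠ k' := fun h => hγ (by simp [occ, h])
          have hγ' : k' ∉ occ γ := fun h => hγ (by simp [occ, h])
          simpa [KModel.locSat, Sum.inr.injEq, hc] using ih hγ' (M.nomI (Sum.inr c))
  | ex g ih =>
      have hγ' : ∀ θ, k' ∉ occ (g θ) := by
        intro θ hθ
        exact hγ (by simpa [occ] using Set.mem_iUnion_of_mem θ hθ)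
      simp only [KModel.locSat]
      exact exists_congr fun θ => ih θ (hγ' θ) w

end AuxSemP

/-- If `p` is a condition of the semantic forcing property and `@_k ⟨a₁⨟a₂⟩k'' ∈ p`,
then `p ∪ {@_k ⟨a₁⟩k', @_{k'} ⟨a₂⟩k''} ∈ P` for some new nominal constant `k' ∈ C`. -/
theorem semP_comp (K : Set (KModel Nom Mo Atom)) (α : Cardinal)
    (hα : Cardinal.aleph0 ≤ α) (hC : #C = α)
    (hpow : #(Sen Nom Mo Atom Subst) ≤ α)
    (p : Set (Sen (Nom ⊕ C) Mo Atom Subst))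
    (hp : p ∈ SemP (C := C) (Subst := Subst) K α)
    (k k'' : Nom ⊕ C) (a₁ a₂ : Act Mo)
    (hmem : Sen.ret k (Sen.pos (Act.comp a₁ a₂) (Sen.nom k'')) ∈ p) :
    ∃ k' : C,
      insert (Sen.ret k (Sen.pos a₁ (Sen.nom (Sum.inr k'))))
        (insert (Sen.ret (Sum.inr k') (Sen.pos a₂ (Sen.nom k''))) p)
        ∈ SemP (C := C) (Subst := Subst) K α := by
  classical
  obtain ⟨hcard, M, hMsat, hMred⟩ := hp
  -- the set of constants occurring in `p`
  set T : Set C := ⋃ γ : p, occ (γ : Sen (Nom ⊕ C) Mo Atom Subst) with hTdef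
  have hoccsub : ∀ γ ∈ p, occ γ ⊆ T := fun γ hγ =>
    Set.subset_iUnion (fun γ : p => occ (γ : Sen (Nom ⊕ C) Mo Atom Subst)) ⟨γ, hγ⟩
  -- #Subst < α
  have h2le : (2 : Cardinal) ≤ #(Sen Nom Mo Atom Subst) := by
    rw [Cardinal.two_le_iff]
    exact ⟨Sen.disj 0 Fin.elim0, Sen.neg (Sen.disj 0 Fin.elim0),
      fun h => by cases h⟩
  have harrow : #(Subst → Sen Nom Mo Atom Subst) ≤ #(Sen Nom Mo Atom Subst) :=
    Cardinal.mk_le_of_injective (f := Sen.ex) (fun _ _ h => by injection h)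
  have hS : #Subst < α :=
    calc #Subst < 2 ^ #Subst := Cardinal.cantor _
      _ ≤ #(Sen Nom Mo Atom Subst) ^ #Subst := Cardinal.power_le_power_right h2le
      _ = #(Subst → Sen Nom Mo Atom Subst) := (Cardinal.power_def _ _).symm
      _ ≤ α := harrow.trans hpow
  -- #T < α
  have hTlt : #T < α := by
    rcases lt_or_ge Cardinal.aleph0 α with hα' | hα'
    · have hβ : Cardinal.aleph0 ⊔ #Subst < α := max_lt hα' hS
      have hle : #T ≤ #(↥p) * (Cardinal.aleph0 ⊔ #Subst) :=
        le_trans (Cardinal.mk_iUnion_le _)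
          (mul_le_mul' le_rfl (ciSup_le' fun γ => occ_card_le _))
      exact lt_of_le_of_lt hle (Cardinal.mul_lt_of_lt hα hcard hβ)
    · have hSfin : Finite Subst :=
        Cardinal.lt_aleph0_iff_finite.mp (lt_of_lt_of_le hS hα')
      have hpfin : p.Finite :=
        Cardinal.lt_aleph0_iff_set_finite.mp (lt_of_lt_of_le hcard hα')
      haveI := hpfin.to_subtype
      have hTfin : T.Finite := Set.finite_iUnion fun γ => occ_finite _
      exact lt_of_lt_of_le hTfin.lt_aleph0 hα
  -- fresh constant
  have hfresh : ∃ c : C, c ∉ T := by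
    by_contra h
    push_neg at h
    have hTuniv : T = Set.univ := Set.eq_univ_of_forall h
    rw [hTuniv, Cardinal.mk_univ, hC] at hTlt
    exact lt_irrefl _ hTlt
  obtain ⟨k', hk'⟩ := hfresh
  -- extract the intermediate world
  obtain ⟨w0⟩ := M.ne
  have h0 := hMsat _ hmem w0
  simp only [KModel.locSat, KModel.acc, Relation.Comp] at h0
  obtain ⟨w', ⟨mid, h1, h2⟩, hkw⟩ := h0
  subst hkw
  -- freshness facts
  have hocc : k' ∉ occ (Sen.ret k (Sen.pos (Act.comp a₁ a₂) (Sen.nom k''))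
      : Sen (Nom ⊕ C) Mo Atom Subst) := fun h => hk' (hoccsub _ hmem h)
  have hk : k ≠ Sum.inr k' := by
    rintro rfl; exact hocc (by simp [occ])
  have hk2 : k'' ≠ Sum.inr k' := by
    rintro rfl; apply hocc; cases k <;> simp [occ]
  -- the modified model
  set M' : KModel (Nom ⊕ C) Mo Atom :=
    KModel.mk M.Wo M.ne (fun x => if x = Sum.inr k' then mid else M.nomI x)
      M.modI M.atomI with hM'def
  have hnomk : M'.nomI k = M.nomI k := if_neg hk
  have hnomk'' : M'.nomI k'' = M.nomI k'' := if_neg hk2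
  have hnomk' : M'.nomI (Sum.inr k') = mid := if_pos rfl
  refine ⟨k', ?_, M', ?_, ?_⟩
  · -- cardinality
    have hone : (1 : Cardinal) < α := lt_of_lt_of_le Cardinal.one_lt_aleph0 hα
    calc #(↥(insert (Sen.ret k (Sen.pos a₁ (Sen.nom (Sum.inr k'))))
          (insert (Sen.ret (Sum.inr k') (Sen.pos a₂ (Sen.nom k''))) p)))
        ≤ #(↥(insert (Sen.ret (Sum.inr k') (Sen.pos a₂ (Sen.nom k''))) p)) + 1 :=
          Cardinal.mk_insert_le
      _ ≤ (#(↥p) + 1) + 1 := add_le_add Cardinal.mk_insert_le le_rfl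
      _ < α := Cardinal.add_lt_of_lt hα (Cardinal.add_lt_of_lt hα hcard hone) hone
  · -- satisfaction
    intro γ hγ
    have hacce : ∀ a : Act Mo, M'.acc a = M.acc a := fun a =>
      acc_mk_eq M M.ne _ a
    rcases hγ with rfl | hγ
    · intro w
      show M'.locSat (Sen.ret k (Sen.pos a₁ (Sen.nom (Sum.inr k')))) w
      simp only [KModel.locSat]
      refine ⟨mid, ?_, hnomk'⟩
      rw [hacce a₁, hnomk]; exact h1
    rcases hγ with rfl | hγ
    · intro w
      show M'.locSat (Sen.ret (Sum.inr k') (Sen.pos a₂ (Sen.nom k''))) w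
      simp only [KModel.locSat]
      refine ⟨M.nomI k'', ?_, if_neg hk2⟩
      rw [hacce a₂]; simpa [hnomk'] using h2
    · intro w
      exact (locSat_update M k' mid γ (fun h => hk' (hoccsub _ hγ h)) w).mpr
        (hMsat γ hγ w)
  · -- reduct
    have hred : M'.reduct = M.reduct := by
      have hn : (fun n : Nom => M'.nomI (Sum.inl n)) = fun n => M.nomI (Sum.inl n) := by
        funext n; exact (if_neg Sum.inl_ne_inr : (if (Sum.inl n : Nom ⊕ C) = Sum.inr k' then mid else M.nomI (Sum.inl n)) = _)
      unfold KModel.reduct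
      rw [hn]
    rw [hred]; exact hMred

end HDFOLR
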